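/- Let (G; t_1,...,t_k) be a simple instance with G quasi-line, let A be a homogeneous clique of G, and let a be a vertex of A. Then no terminal belongs to A, the subgraph G' of G induced by V(G) \ (A \ {a}) is quasi-line, (G'; t_1,...,t_k) is a simple instance, and (G; t_1,...,t_k) has a solution if and only if (G'; t_1,...,t_k) has a solution. -/

import Mathlib

/-- A graph is claw-free if it has no induced subgraph isomorphic to the claw `K_{1,3}`:
a center `x` adjacent to three pairwise distinct, pairwise non-adjacent leaves. -/
def ClawFree {V : Type*} (G : SimpleGraph V) : Prop :=
  ¬ ∃ x a b c : V, G.Adj x a ∧ G.Adj x b ∧ G.Adj x c ∧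
      a ≠ b ∧ a ≠ c ∧ b ≠ c ∧ ¬ G.Adj a b ∧ ¬ G.Adj a c ∧ ¬ G.Adj b c

/-- `l` is the list of consecutive vertices of an induced path of `G`:
its vertices are distinct and two of them are adjacent in `G` exactly when
they are consecutive in `l`. -/
def IsInducedPathList {V : Type*} (G : SimpleGraph V) (l : List V) : Prop :=
  l.Nodup ∧ ∀ i j : Fin l.length,
    G.Adj (l.get i) (l.get j) ↔ (i.1 + 1 = j.1 ∨ j.1 + 1 = i.1)

/-- `l` is a solution for the instance `(G; t 0, …, t (k-1))`: an induced path with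
endpoints `t 0` and `t (k-1)` that contains every terminal, the terminals appearing
along the path in the order `t 0, t 1, …, t (k-1)`. -/
def IsSolution {V : Type*} (G : SimpleGraph V) {k : ℕ} (t : Fin k → V) (l : List V) : Prop :=
  IsInducedPathList G l ∧
  ∃ pos : Fin k → Fin l.length,
    StrictMono pos ∧ (∀ i, l.get (pos i) = t i) ∧
    (∀ i : Fin k, i.1 = 0 → (pos i).1 = 0) ∧
    (∀ i : Fin k, i.1 = k - 1 → (pos i).1 = l.length - 1)

/-- The instance `(G; t 0, …, t (k-1))` is simple: the terminals are distinct, the two end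
terminals have degree one in `G`, every other terminal has degree two in `G` with its two
neighbors non-adjacent, distinct terminals are at distance at least four, and `G` is
connected. -/
def SimpleInstance {V : Type*} (G : SimpleGraph V) {k : ℕ} (t : Fin k → V) : Prop :=
  2 ≤ k ∧ Function.Injective t ∧
  (∀ i : Fin k, (i.1 = 0 ∨ i.1 = k - 1) → (G.neighborSet (t i)).ncard = 1) ∧
  (∀ i : Fin k, i.1 ≠ 0 → i.1 ≠ k - 1 →
      (G.neighborSet (t i)).ncard = 2 ∧
      ∀ x y : V, G.Adj (t i) x → G.Adj (t i) y → x ≠ y → ¬ G.Adj x y) ∧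
  (∀ i j : Fin k, i ≠ j → 4 ≤ G.dist (t i) (t j)) ∧
  G.Connected

/-- A graph is quasi-line if the neighborhood of every vertex is the union of two cliques. -/
def QuasiLine {V : Type*} (G : SimpleGraph V) : Prop :=
  ∀ u : V, ∃ A B : Set V, G.IsClique A ∧ G.IsClique B ∧ G.neighborSet u = A ∪ B

/-- A nontrivial clique `A` (a clique with at least two vertices) is homogeneous if every
vertex outside `A` is adjacent either to all vertices of `A` or to none of them. -/
def IsHomogeneousClique {V : Type*} (G : SimpleGraph V) (A : Set V) : Prop :=
  G.IsClique A ∧ A.Nontrivial ∧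
    ∀ v ∉ A, (∀ a ∈ A, G.Adj v a) ∨ (∀ a ∈ A, ¬ G.Adj v a)

open Classical in
private noncomputable def fA {V : Type*} (A : Set V) (a : V) (x : V) : V :=
  if x ∈ A then a else x

open Classical in
private noncomputable def projA {V : Type*} (A : Set V) (a : V) (v : V) : V :=
  if v ∈ A ∧ v ≠ a then a else v

private def cIdx (p0 m : ℕ) : ℕ := if m ≤ p0 then m else m + 1

private noncomputable def cVal {V : Type*} (l : List V) (a : V) (p0 m : ℕ) : V :=
  if m = p0 then a else l.getD (cIdx p0 m) a

set_option maxHeartbeats 1000000 in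
private lemma mkSol {V : Type*} (G : SimpleGraph V) {k : ℕ} (t : Fin k → V) {n : ℕ}
    (g : Fin n → V) (hinj : Function.Injective g)
    (hadj : ∀ i j : Fin n, G.Adj (g i) (g j) ↔ (i.1 + 1 = j.1 ∨ j.1 + 1 = i.1))
    (pos : Fin k → Fin n) (hmono : StrictMono pos) (hpt : ∀ i, g (pos i) = t i)
    (h0 : ∀ i : Fin k, i.1 = 0 → (pos i).1 = 0)
    (hlast : ∀ i : Fin k, i.1 = k - 1 → (pos i).1 = n - 1) :
    IsSolution G t (List.ofFn g) := by
  have hlen : (List.ofFn g).length = n := List.length_ofFn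
  constructor
  · refine ⟨List.nodup_ofFn.mpr hinj, ?_⟩
    intro i j
    rw [List.get_ofFn, List.get_ofFn]
    rw [hadj (Fin.cast hlen i) (Fin.cast hlen j)]
    rfl
  · refine ⟨fun i => Fin.cast hlen.symm (pos i), ?_, ?_, ?_, ?_⟩
    · intro i j h; exact hmono h
    · intro i; rw [List.get_ofFn]; exact hpt i
    · intro i hi; exact h0 i hi
    · intro i hi
      show (pos i).1 = (List.ofFn g).length - 1
      rw [hlen]; exact hlast i hi

set_option maxHeartbeats 1000000 in
/-- Lemma 12: in a simple quasi-line instance with a homogeneous clique `A` and `a ∈ A`,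
no terminal lies in `A`; moreover the graph `G'` obtained by contracting `A` to `a`
(i.e. the subgraph induced on `V(G) \ (A \ {a})`) is quasi-line, the instance `(G'; t)`
is simple, and `(G; t)` has a solution if and only if `(G'; t)` has one. -/
theorem stmt8 {V : Type*} [Fintype V] (G : SimpleGraph V) {k : ℕ} (t : Fin k → V)
    (hsi : SimpleInstance G t) (hql : QuasiLine G)
    (A : Set V) (hA : IsHomogeneousClique G A) (a : V) (ha : a ∈ A) :
    ∃ hnt : ∀ i, t i ∉ A,
      QuasiLine (G.induce {v | v ∉ A \ {a}}) ∧
      SimpleInstance (G.induce {v | v ∉ A \ {a}})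
        (fun i => ⟨t i, fun hm => hnt i hm.1⟩) ∧
      ((∃ l : List V, IsSolution G t l) ↔
        ∃ l : List {v : V // v ∈ ({v | v ∉ A \ {a}} : Set V)},
          IsSolution (G.induce {v | v ∉ A \ {a}}) (fun i => ⟨t i, fun hm => hnt i hm.1⟩) l) := by
  classical
  obtain ⟨hk, hinj, hdeg1, hdeg2, hdist, hconn⟩ := hsi
  obtain ⟨hclique, hAnt, hhom⟩ := hA
  set S : Set V := {v | v ∉ A \ {a}} with hS
  have hmemS : ∀ v : V, v ∈ S ↔ ¬(v ∈ A ∧ v ≠ a) := by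
    intro v
    simp only [hS, Set.mem_setOf_eq, Set.mem_diff, Set.mem_singleton_iff]
  have haS : a ∈ S := (hmemS a).mpr (fun h => h.2 rfl)
  have hnS : ∀ v, v ∉ A → v ∈ S := fun v hv => (hmemS v).mpr (fun h => hv h.1)
  have hswap : ∀ x, x ∉ A → ∀ y ∈ A, ∀ z ∈ A, (G.Adj x y ↔ G.Adj x z) := by
    intro x hx y hy z hz
    rcases hhom x hx with h | h
    · exact iff_of_true (h y hy) (h z hz)
    · exact iff_of_false (h y hy) (h z hz)
  -- no terminal in A
  have hnt : ∀ i, t i ∉ A := by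
    intro i hti
    obtain ⟨x, hxA, y, hyA, hxy⟩ := hAnt
    obtain ⟨b, hbA, hbne⟩ : ∃ b ∈ A, b ≠ t i := by
      by_cases hx : x = t i
      · exact ⟨y, hyA, fun h => hxy (hx.trans h.symm)⟩
      · exact ⟨x, hxA, hx⟩
    have hadjb : G.Adj (t i) b := hclique hti hbA (fun h => hbne h.symm)
    by_cases hi : i.1 = 0 ∨ i.1 = k - 1
    · -- endpoint terminal of degree 1
      have h1 := hdeg1 i hi
      obtain ⟨c, hc⟩ := Set.ncard_eq_one.mp h1
      have hbc : b = c := by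
        have hb : b ∈ G.neighborSet (t i) := hadjb
        rw [hc] at hb; exact hb
      rw [← hbc] at hc
      have hA2 : ∀ z ∈ A, z = t i ∨ z = b := by
        intro z hzA
        by_cases hz : z = t i
        · exact Or.inl hz
        · right
          have hzb : z ∈ G.neighborSet (t i) := hclique hti hzA (fun h => hz h.symm)
          rw [hc] at hzb; exact hzb
      have hNbsub : ∀ v, G.Adj b v → v = t i := by
        intro v hv
        by_cases hvA : v ∈ A
        · rcases hA2 v hvA with h | h
          · exact h
          · subst h; exact absurd hv (G.loopless.irrefl _)
        · rcases hhom v hvA with h | h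
          · have hvN : v ∈ G.neighborSet (t i) := (h (t i) hti).symm
            rw [hc] at hvN
            exact absurd (hvN ▸ hvA) (fun hh => hh hbA)
          · exact absurd hv (fun hh => h b hbA hh.symm)
      have hcomp : ∀ (u w : V) (p : G.Walk u w), (u = t i ∨ u = b) → (w = t i ∨ w = b) := by
        intro u w p
        induction p with
        | nil => exact id
        | cons hadj q ih =>
          intro hu
          apply ih
          rcases hu with rfl | rfl
          · right
            have hv : _ ∈ G.neighborSet (t i) := hadj
            rw [hc] at hv; exact hv
          · left; exact hNbsub _ hadj
      obtain ⟨j, hjne⟩ : ∃ j : Fin k, j ≠ i := by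
        rcases eq_or_ne (⟨0, by omega⟩ : Fin k) i with h | h
        · refine ⟨⟨k - 1, by omega⟩, ?_⟩
          rw [← h]
          intro hh
          have := congrArg Fin.val hh
          simp at this
          omega
        · exact ⟨⟨0, by omega⟩, h⟩
      have hd := hdist i j (Ne.symm hjne)
      have hw := (hconn (t i) (t j)).some
      rcases hcomp _ _ hw (Or.inl rfl) with h | h
      · exact hjne (hinj h.symm).symm
      · have hadjb' : G.Adj (t i) (t j) := by rw [h]; exact hadjb
        have hle : G.dist (t i) (t j) ≤ 1 := by
          have := SimpleGraph.dist_le hadjb'.toWalk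
          simpa using this
        omega
    · push_neg at hi
      obtain ⟨h2, hnadj⟩ := hdeg2 i hi.1 hi.2
      obtain ⟨x', y', hxy', hN⟩ := Set.ncard_eq_two.mp h2
      have hbN : b ∈ G.neighborSet (t i) := hadjb
      obtain ⟨c, hcN, hcb⟩ : ∃ c ∈ G.neighborSet (t i), c ≠ b := by
        rw [hN] at hbN ⊢
        simp only [Set.mem_insert_iff, Set.mem_singleton_iff] at hbN ⊢
        rcases hbN with rfl | rfl
        · exact ⟨y', Or.inr rfl, Ne.symm hxy'⟩
        · exact ⟨x', Or.inl rfl, hxy'⟩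
      have hcadj : G.Adj (t i) c := hcN
      have hcb' : G.Adj b c := by
        by_cases hcA : c ∈ A
        · exact hclique hbA hcA (Ne.symm hcb)
        · rcases hhom c hcA with h | h
          · exact (h b hbA).symm
          · exact absurd hcadj (fun hh => h (t i) hti hh.symm)
      exact hnadj b c hadjb hcadj (Ne.symm hcb) hcb'
  -- no neighbor of a terminal is in A
  have hnA : ∀ (i : Fin k) (x : V), G.Adj (t i) x → x ∉ A := by
    intro i x hadj hxA
    rcases hhom (t i) (hnt i) with hall | hnone
    · obtain ⟨u, huA, v, hvA, huv⟩ := hAnt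
      have hu : G.Adj (t i) u := hall u huA
      have hv : G.Adj (t i) v := hall v hvA
      by_cases hi : i.1 = 0 ∨ i.1 = k - 1
      · have h1 := hdeg1 i hi
        have hlt : 1 < (G.neighborSet (t i)).ncard := by
          rw [Set.one_lt_ncard (Set.toFinite _)]
          exact ⟨u, hu, v, hv, huv⟩
        omega
      · push_neg at hi
        obtain ⟨_, hnadj⟩ := hdeg2 i hi.1 hi.2
        exact hnadj u v hu hv huv (hclique huA hvA huv)
    · exact hnone x hxA hadj
  have hntS : ∀ i, t i ∈ S := fun i => hnS _ (hnt i)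
  have hnAS : ∀ i x, G.Adj (t i) x → x ∈ S := fun i x h => hnS _ (hnA i x h)
  -- projection lemmas
  have hprojS : ∀ v, projA A a v ∈ S := by
    intro v
    unfold projA
    split_ifs with h
    exacts [haS, (hmemS v).mpr h]
  have hprojid : ∀ v (hv : v ∈ S), projA A a v = v := by
    intro v hv
    unfold projA
    exact if_neg ((hmemS v).mp hv)
  -- reachability in the induced graph
  have hreach : ∀ (x y : V) (p : G.Walk x y) (hy : y ∈ S),
      (G.induce S).Reachable ⟨projA A a x, hprojS x⟩ ⟨y, hy⟩ := by
    intro x y p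
    induction p with
    | nil =>
      intro hy
      have he : (⟨projA A a _, hprojS _⟩ : ↥S) = ⟨_, hy⟩ := Subtype.ext (hprojid _ hy)
      rw [he]
    | @cons u v w huv q ih =>
      intro hy
      refine SimpleGraph.Reachable.trans ?_ (ih hy)
      have key : projA A a u = projA A a v ∨ G.Adj (projA A a u) (projA A a v) := by
        by_cases hu : u ∈ A ∧ u ≠ a <;> by_cases hv : v ∈ A ∧ v ≠ a
        · left; unfold projA; rw [if_pos hu, if_pos hv]
        · unfold projA; rw [if_pos hu, if_neg hv]
          by_cases hva : v = a
          · left; exact hva.symm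
          · right
            have hvA : v ∉ A := fun h => hv ⟨h, hva⟩
            rcases hhom v hvA with h | h
            · exact (h a ha).symm
            · exact absurd huv (fun hh => h u hu.1 hh.symm)
        · unfold projA; rw [if_neg hu, if_pos hv]
          by_cases hua : u = a
          · left; exact hua
          · right
            have huA : u ∉ A := fun h => hu ⟨h, hua⟩
            rcases hhom u huA with h | h
            · exact h a ha
            · exact absurd huv (h v hv.1)
        · right; unfold projA; rw [if_neg hu, if_neg hv]; exact huv
      rcases key with h | h
      · have he : (⟨projA A a u, hprojS u⟩ : ↥S) = ⟨projA A a v, hprojS v⟩ := Subtype.ext h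
        rw [he]
      · exact SimpleGraph.Adj.reachable
          (show (G.induce S).Adj ⟨projA A a u, hprojS u⟩ ⟨projA A a v, hprojS v⟩ from h)
  have hconn' : (G.induce S).Connected := by
    rw [SimpleGraph.connected_iff]
    refine ⟨?_, ⟨⟨a, haS⟩⟩⟩
    intro u v
    obtain ⟨p⟩ := hconn u.1 v.1
    have hr := hreach u.1 v.1 p v.2
    have he : (⟨projA A a u.1, hprojS u.1⟩ : ↥S) = u := Subtype.ext (hprojid u.1 u.2)
    rwa [he] at hr
  -- neighbor set transfer for terminals
  have himg : ∀ i : Fin k,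
      Subtype.val '' ((G.induce S).neighborSet ⟨t i, fun hm => hnt i hm.1⟩) =
        G.neighborSet (t i) := by
    intro i
    ext x
    constructor
    · rintro ⟨v, hv, rfl⟩
      exact hv
    · intro hx
      exact ⟨⟨x, hnAS i x hx⟩, hx, rfl⟩
  have hncard : ∀ i : Fin k,
      ((G.induce S).neighborSet ⟨t i, fun hm => hnt i hm.1⟩).ncard =
        (G.neighborSet (t i)).ncard := by
    intro i
    rw [← himg i, Set.ncard_image_of_injective _ Subtype.val_injective]
  refine ⟨hnt, ?_, ?_, ?_⟩
  · -- quasi-line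
    intro u
    obtain ⟨A₁, A₂, h1, h2, hN⟩ := hql u.1
    refine ⟨{v : ↥S | v.1 ∈ A₁}, {v : ↥S | v.1 ∈ A₂}, ?_, ?_, ?_⟩
    · intro x hx y hy hne
      exact h1 hx hy (fun h => hne (Subtype.ext h))
    · intro x hx y hy hne
      exact h2 hx hy (fun h => hne (Subtype.ext h))
    · ext v
      have hv := Set.ext_iff.mp hN v.1
      simp only [SimpleGraph.mem_neighborSet, Set.mem_union, Set.mem_setOf_eq] at hv ⊢
      exact hv
  · -- simple instance
    refine ⟨hk, ?_, ?_, ?_, ?_, hconn'⟩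
    · intro i j h
      exact hinj (congrArg Subtype.val h)
    · intro i hi
      rw [hncard i]
      exact hdeg1 i hi
    · intro i h1 h2
      refine ⟨by rw [hncard i]; exact (hdeg2 i h1 h2).1, ?_⟩
      intro x y hx hy hxy
      exact (hdeg2 i h1 h2).2 x.1 y.1 hx hy (fun h => hxy (Subtype.ext h))
    · intro i j hij
      obtain ⟨p, hp⟩ := SimpleGraph.Reachable.exists_walk_length_eq_dist
        (hconn' ⟨t i, fun hm => hnt i hm.1⟩ ⟨t j, fun hm => hnt j hm.1⟩)
      have hle := SimpleGraph.dist_le (p.map (SimpleGraph.Embedding.induce S).toHom)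
      rw [SimpleGraph.Walk.length_map] at hle
      have h4 := hdist i j hij
      have hle' : 4 ≤ p.length := le_trans h4 hle
      exact le_trans hle' (le_of_eq hp)
  · constructor
    · rintro ⟨l, ⟨hnd, hadjl⟩, pos, hmono, hpt, h0, hlastp⟩
      have hget : Function.Injective l.get := List.nodup_iff_injective_get.mp hnd
      have hcons : ∀ p q : Fin l.length, l.get p ∈ A → l.get q ∈ A → p.1 < q.1 →
          q.1 = p.1 + 1 := by
        intro p q hp hq hlt
        have hpq : p ≠ q := by intro h; rw [h] at hlt; omega
        have hne : l.get p ≠ l.get q := fun h => hpq (hget h)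
        have := (hadjl p q).mp (hclique hp hq hne)
        omega
      have hposA : ∀ i : Fin k, l.get (pos i) ∉ A := fun i => by
        rw [hpt i]; exact hnt i
      by_cases hex : ∃ p q : Fin l.length, p.1 < q.1 ∧ l.get p ∈ A ∧ l.get q ∈ A
      · -- exactly two consecutive positions of A on the path
        obtain ⟨p0, q0, hlt0, hbA0, hqA0⟩ := hex
        have hq0 : q0.1 = p0.1 + 1 := hcons p0 q0 hbA0 hqA0 hlt0
        have honly : ∀ r : Fin l.length, l.get r ∈ A → r.1 = p0.1 ∨ r.1 = p0.1 + 1 := by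
          intro r hr
          rcases Nat.lt_trichotomy r.1 p0.1 with h | h | h
          · exfalso
            have h1 := hcons r p0 hr hbA0 h
            have h2 := hcons r q0 hr hqA0 (by omega)
            omega
          · exact Or.inl h
          · have := hcons p0 r hbA0 hr h; omega
        have hk0 : (0:ℕ) < k := by omega
        have hkl : k - 1 < k := by omega
        have hz := h0 ⟨0, hk0⟩ rfl
        have hlz := hlastp ⟨k-1, hkl⟩ rfl
        have hp0pos : 0 < p0.1 := by
          rcases Nat.eq_zero_or_pos p0.1 with h | h
          · exfalso
            apply hposA ⟨0, hk0⟩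
            have he : pos ⟨0, hk0⟩ = p0 := Fin.ext (by omega)
            rw [he]; exact hbA0
          · exact h
        have hq0last : q0.1 ≠ l.length - 1 := by
          intro h
          apply hposA ⟨k-1, hkl⟩
          have he : pos ⟨k-1, hkl⟩ = q0 := Fin.ext (by omega)
          rw [he]; exact hqA0
        have hbig : p0.1 + 3 ≤ l.length := by
          have := q0.isLt; omega
        have hidxlt : ∀ m : ℕ, m < l.length - 1 → cIdx p0.1 m < l.length := by
          intro m hm; unfold cIdx; split_ifs <;> omega
        have hcval : ∀ (m : ℕ) (hm : m < l.length - 1), m ≠ p0.1 →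
            cVal l a p0.1 m = l.get ⟨cIdx p0.1 m, hidxlt m hm⟩ := by
          intro m hm hne
          unfold cVal
          rw [if_neg hne]
          exact List.getD_eq_getElem l a (hidxlt m hm)
        have hcval0 : cVal l a p0.1 p0.1 = a := by unfold cVal; rw [if_pos rfl]
        have hcnotA : ∀ (m : ℕ) (hm : m < l.length - 1), m ≠ p0.1 →
            cVal l a p0.1 m ∉ A := by
          intro m hm hne hmem
          rw [hcval m hm hne] at hmem
          have h2 : cIdx p0.1 m = p0.1 ∨ cIdx p0.1 m = p0.1 + 1 := honly _ hmem
          unfold cIdx at h2; split_ifs at h2 <;> omega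
        have hcS : ∀ (m : ℕ), m < l.length - 1 → cVal l a p0.1 m ∈ S := by
          intro m hm
          by_cases hp : m = p0.1
          · rw [hp, hcval0]; exact haS
          · exact hnS _ (hcnotA m hm hp)
        have hcinj : ∀ (m m' : ℕ), m < l.length - 1 → m' < l.length - 1 →
            cVal l a p0.1 m = cVal l a p0.1 m' → m = m' := by
          intro m m' hm hm' h
          by_cases hp : m = p0.1 <;> by_cases hq : m' = p0.1
          · omega
          · exfalso; rw [hp, hcval0] at h; exact hcnotA m' hm' hq (h ▸ ha)
          · exfalso; rw [hq, hcval0] at h; exact hcnotA m hm hp (h.symm ▸ ha)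
          · rw [hcval m hm hp, hcval m' hm' hq] at h
            have h3 := hget h
            have h2 : cIdx p0.1 m = cIdx p0.1 m' := congrArg Fin.val h3
            unfold cIdx at h2; split_ifs at h2 <;> omega
        have hadjlt : ∀ (m m' : ℕ) (hm : m < l.length - 1) (hm' : m' < l.length - 1),
            m < m' → (G.Adj (cVal l a p0.1 m) (cVal l a p0.1 m') ↔ m + 1 = m') := by
          intro m m' hm hm' hmm
          by_cases hq : m' = p0.1
          · have hp : m ≠ p0.1 := by omega
            rw [hq, hcval0, hcval m hm hp]
            have hgp : l.get ⟨cIdx p0.1 m, hidxlt m hm⟩ ∉ A := by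
              intro hmem
              exact hcnotA m hm hp (by rw [hcval m hm hp]; exact hmem)
            rw [hswap _ hgp a ha (l.get p0) hbA0]
            rw [hadjl ⟨cIdx p0.1 m, hidxlt m hm⟩ p0]
            have hci : cIdx p0.1 m = m := by unfold cIdx; rw [if_pos (by omega)]
            show (cIdx p0.1 m + 1 = p0.1 ∨ p0.1 + 1 = cIdx p0.1 m) ↔ m + 1 = p0.1
            rw [hci]; omega
          · by_cases hp : m = p0.1
            · rw [hp, hcval0, hcval m' hm' hq]
              have hgq : l.get ⟨cIdx p0.1 m', hidxlt m' hm'⟩ ∉ A := by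
                intro hmem
                exact hcnotA m' hm' hq (by rw [hcval m' hm' hq]; exact hmem)
              rw [SimpleGraph.adj_comm]
              rw [hswap _ hgq a ha (l.get q0) hqA0]
              rw [hadjl ⟨cIdx p0.1 m', hidxlt m' hm'⟩ q0]
              have hci : cIdx p0.1 m' = m' + 1 := by unfold cIdx; rw [if_neg (by omega)]
              show (cIdx p0.1 m' + 1 = q0.1 ∨ q0.1 + 1 = cIdx p0.1 m') ↔ p0.1 + 1 = m'
              rw [hci]; omega
            · rw [hcval m hm hp, hcval m' hm' hq]
              rw [hadjl ⟨cIdx p0.1 m, hidxlt m hm⟩ ⟨cIdx p0.1 m', hidxlt m' hm'⟩]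
              show (cIdx p0.1 m + 1 = cIdx p0.1 m' ∨ cIdx p0.1 m' + 1 = cIdx p0.1 m) ↔
                m + 1 = m'
              unfold cIdx; split_ifs <;> omega
        have hadjfull : ∀ p q : Fin (l.length - 1),
            (G.induce S).Adj ⟨cVal l a p0.1 p.1, hcS p.1 p.isLt⟩
              ⟨cVal l a p0.1 q.1, hcS q.1 q.isLt⟩ ↔ (p.1 + 1 = q.1 ∨ q.1 + 1 = p.1) := by
          intro p q
          show G.Adj (cVal l a p0.1 p.1) (cVal l a p0.1 q.1) ↔ _
          rcases Nat.lt_trichotomy p.1 q.1 with h | h | h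
          · rw [hadjlt p.1 q.1 p.isLt q.isLt h]; omega
          · have he : p = q := Fin.ext h
            subst he
            exact iff_of_false (G.loopless.irrefl _) (by omega)
          · rw [SimpleGraph.adj_comm, hadjlt q.1 p.1 q.isLt p.isLt h]; omega
        have hposnot : ∀ i : Fin k, (pos i).1 ≠ p0.1 ∧ (pos i).1 ≠ p0.1 + 1 := by
          intro i
          constructor
          · intro h
            exact hposA i (by rw [show pos i = p0 from Fin.ext h]; exact hbA0)
          · intro h
            exact hposA i (by rw [show pos i = q0 from Fin.ext (by omega)]; exact hqA0)
        have hposlt : ∀ i : Fin k,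
            (if (pos i).1 ≤ p0.1 then (pos i).1 else (pos i).1 - 1) < l.length - 1 := by
          intro i
          have h1 := (pos i).isLt
          have h2 := hposnot i
          split_ifs <;> omega
        refine ⟨List.ofFn (fun p : Fin (l.length - 1) =>
            (⟨cVal l a p0.1 p.1, hcS p.1 p.isLt⟩ : ↥S)),
          mkSol (G.induce S) _ _ ?_ hadjfull
            (fun i => ⟨if (pos i).1 ≤ p0.1 then (pos i).1 else (pos i).1 - 1, hposlt i⟩)
            ?_ ?_ ?_ ?_⟩
        · intro p q h
          exact Fin.ext (hcinj p.1 q.1 p.isLt q.isLt (congrArg Subtype.val h))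
        · intro i j hij
          have h1 : (pos i).1 < (pos j).1 := hmono hij
          have h2 := hposnot i
          have h3 := hposnot j
          show (if (pos i).1 ≤ p0.1 then (pos i).1 else (pos i).1 - 1) <
            (if (pos j).1 ≤ p0.1 then (pos j).1 else (pos j).1 - 1)
          split_ifs <;> omega
        · intro i
          apply Subtype.ext
          show cVal l a p0.1 (if (pos i).1 ≤ p0.1 then (pos i).1 else (pos i).1 - 1) = t i
          have h2 := hposnot i
          have h1 := (pos i).isLt
          split_ifs with h
          · rw [hcval (pos i).1 (by omega) h2.1]
            have hci : cIdx p0.1 (pos i).1 = (pos i).1 := by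
              unfold cIdx; rw [if_pos h]
            rw [← hpt i]
            exact congrArg l.get (Fin.ext hci)
          · rw [hcval ((pos i).1 - 1) (by omega) (by omega)]
            have hci : cIdx p0.1 ((pos i).1 - 1) = (pos i).1 := by
              unfold cIdx; rw [if_neg (by omega)]; omega
            rw [← hpt i]
            exact congrArg l.get (Fin.ext hci)
        · intro i hi
          show (if (pos i).1 ≤ p0.1 then (pos i).1 else (pos i).1 - 1) = 0
          rw [h0 i hi]
          simp
        · intro i hi
          show (if (pos i).1 ≤ p0.1 then (pos i).1 else (pos i).1 - 1) = l.length - 1 - 1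
          rw [hlastp i hi, if_neg (by omega)]
      · -- at most one position of A on the path
        have hone : ∀ p q : Fin l.length, l.get p ∈ A → l.get q ∈ A → p = q := by
          intro p q hp hq
          by_contra hne
          have hne' : p.1 ≠ q.1 := fun h => hne (Fin.ext h)
          rcases Nat.lt_or_ge p.1 q.1 with h | h
          · exact hex ⟨p, q, h, hp, hq⟩
          · exact hex ⟨q, p, by omega, hq, hp⟩
        have hfS : ∀ p : Fin l.length, fA A a (l.get p) ∈ S := by
          intro p
          unfold fA
          split_ifs with h
          exacts [haS, hnS _ h]
        have hiff : ∀ p q : Fin l.length,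
            G.Adj (fA A a (l.get p)) (fA A a (l.get q)) ↔ G.Adj (l.get p) (l.get q) := by
          intro p q
          by_cases hp : l.get p ∈ A <;> by_cases hq : l.get q ∈ A
          · have he := hone p q hp hq
            subst he
            exact iff_of_false (G.loopless.irrefl _) (G.loopless.irrefl _)
          · unfold fA; rw [if_pos hp, if_neg hq]
            rcases hhom _ hq with h | h
            · exact iff_of_true (h a ha).symm (h _ hp).symm
            · exact iff_of_false (fun hh => h a ha hh.symm) (fun hh => h _ hp hh.symm)
          · unfold fA; rw [if_neg hp, if_pos hq]
            rcases hhom _ hp with h | h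
            · exact iff_of_true (h a ha) (h _ hq)
            · exact iff_of_false (h a ha) (h _ hq)
          · unfold fA; rw [if_neg hp, if_neg hq]
        refine ⟨List.ofFn (fun p : Fin l.length => (⟨fA A a (l.get p), hfS p⟩ : ↥S)),
          mkSol (G.induce S) _ _ ?_ ?_ pos hmono ?_ h0 hlastp⟩
        · intro p q h
          have h' : fA A a (l.get p) = fA A a (l.get q) := congrArg Subtype.val h
          by_cases hp : l.get p ∈ A <;> by_cases hq : l.get q ∈ A
          · exact hone p q hp hq
          · exfalso; unfold fA at h'; rw [if_pos hp, if_neg hq] at h'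
            exact hq (h' ▸ ha)
          · exfalso; unfold fA at h'; rw [if_neg hp, if_pos hq] at h'
            exact hp (h'.symm ▸ ha)
          · unfold fA at h'; rw [if_neg hp, if_neg hq] at h'
            exact hget h'
        · intro p q
          exact (hiff p q).trans (hadjl p q)
        · intro i
          apply Subtype.ext
          show fA A a (l.get (pos i)) = t i
          unfold fA
          rw [if_neg (hposA i), hpt i]
    · rintro ⟨l, ⟨hnd, hadjl⟩, pos, hmono, hpt, h0, hlastp⟩
      refine ⟨List.ofFn (fun p : Fin l.length => (l.get p).1),
        mkSol G t _ ?_ ?_ pos hmono ?_ h0 ?_⟩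
      · intro p q h
        exact List.nodup_iff_injective_get.mp hnd (Subtype.ext h)
      · intro p q
        exact hadjl p q
      · intro i
        exact congrArg Subtype.val (hpt i)
      · exact hlastp
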